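/- Let N be an abelian group with the property that for every finite subgroup H of N there exists a subgroup H' of N with H' isomorphic to H and H ∩ H' = {0}. Then for every finite subgroup H of N there is an injective group homomorphism from ⨁_ℕ H (the direct sum of countably infinitely many copies of H) into N. -/
import Mathlib

/-- **Iteration step in the proof of Theorem B.** If every finite subgroup `H` of an abelian
group `N` admits a disjoint isomorphic copy `H'` inside `N` (`H' ≅ H`, `H ∩ H' = {0}`), then
for every finite subgroup `H` the direct sum of countably infinitely many copies of `H`
(encoded as `ℕ →₀ H`) embeds into `N`. -/
theorem doubling_implies_infinite_sum_embeds
    (N : Type*) [AddCommGroup N]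
    (h : ∀ H : AddSubgroup N, Finite H →
      ∃ H' : AddSubgroup N, Nonempty (H' ≃+ H) ∧ H ⊓ H' = ⊥) :
    ∀ H : AddSubgroup N, Finite H →
      ∃ f : (ℕ →₀ H) →+ N, Function.Injective f := by
  classical
  intro H hH
  -- sup of finite subgroups is finite
  have finsup : ∀ (A B : AddSubgroup N), Finite A → Finite B →
      Finite (A ⊔ B : AddSubgroup N) := by
    intro A B fA fB
    have hset : ((A ⊔ B : AddSubgroup N) : Set N).Finite := by
      rw [AddSubgroup.add_normal]
      exact Set.Finite.add (Set.toFinite _) (Set.toFinite _)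
    exact hset.to_subtype
  choose F hF1 hF2 using h
  -- the step function: from a finite subgroup `K` containing `H`, produce an embedding of `H`
  -- into the disjoint copy of `K`.
  let T := {K : AddSubgroup N // Finite K ∧ H ≤ K}
  let step : T → (H →+ N) := fun p =>
    (F p.1 p.2.1).subtype.comp
      (((hF1 p.1 p.2.1).some.symm.toAddMonoidHom).comp (AddSubgroup.inclusion p.2.2))
  have step_inj : ∀ p : T, Function.Injective (step p) := by
    intro p
    exact (F p.1 p.2.1).subtype_injective.comp
      ((hF1 p.1 p.2.1).some.symm.injective.comp (AddSubgroup.inclusion_injective p.2.2))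
  have step_range : ∀ p : T, (step p).range ≤ F p.1 p.2.1 := by
    rintro p x ⟨y, rfl⟩
    exact ((hF1 p.1 p.2.1).some.symm ((AddSubgroup.inclusion p.2.2) y)).2
  have step_disj : ∀ p : T, p.1 ⊓ (step p).range = ⊥ := by
    intro p
    refine le_antisymm ?_ bot_le
    exact le_trans (inf_le_inf_left _ (step_range p)) (le_of_eq (hF2 p.1 p.2.1))
  -- the recursion
  haveI : Finite (F H hH) := Finite.of_equiv _ (hF1 H hH).some.symm.toEquiv
  let next : T → T := fun p =>
    ⟨p.1 ⊔ (step p).range, by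
      have : Finite ((step p).range) := by
        haveI := p.2.1
        haveI : Finite (F p.1 p.2.1) :=
          Finite.of_equiv _ (hF1 p.1 p.2.1).some.symm.toEquiv
        exact Finite.of_injective _ (AddSubgroup.inclusion_injective (step_range p))
      exact finsup _ _ p.2.1 this,
      le_trans p.2.2 le_sup_left⟩
  let seq : ℕ → T := fun n => next^[n] ⟨H, hH, le_rfl⟩
  have seq_succ : ∀ n, seq (n + 1) = next (seq n) := by
    intro n
    exact Function.iterate_succ_apply' next n _
  let g : ℕ → (H →+ N) := fun n => step (seq n)
  -- monotonicity of the filtration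
  have seq_mono : ∀ m n, m ≤ n → (seq m).1 ≤ (seq n).1 := by
    intro m n hmn
    induction n with
    | zero => simp [Nat.le_zero.mp hmn]
    | succ k ih =>
      rcases Nat.lt_or_ge m (k + 1) with hlt | hge
      · have := ih (Nat.lt_succ_iff.mp hlt)
        rw [seq_succ]
        exact le_trans this le_sup_left
      · have : m = k + 1 := le_antisymm hmn hge
        subst this; exact le_rfl
  have range_le : ∀ i n, i < n → (g i).range ≤ (seq n).1 := by
    intro i n hin
    have h1 : (g i).range ≤ (seq (i + 1)).1 := by
      rw [seq_succ]; exact le_sup_right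
    exact le_trans h1 (seq_mono _ _ hin)
  -- the candidate map
  refine ⟨Finsupp.liftAddHom g, ?_⟩
  rw [injective_iff_map_eq_zero]
  intro x hx
  rw [Finsupp.liftAddHom_apply] at hx
  -- key: sums supported below n lie in seq n
  have mem_seq : ∀ (y : ℕ →₀ H) (n : ℕ), (∀ i ∈ y.support, i < n) →
      (y.sum fun i a => g i a) ∈ (seq n).1 := by
    intro y n hy
    refine AddSubgroup.sum_mem _ ?_
    intro i hi
    exact range_le i n (hy i hi) ⟨y i, rfl⟩
  -- main induction
  have key : ∀ n (y : ℕ →₀ H), (∀ i ∈ y.support, i < n) →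
      (y.sum fun i a => g i a) = 0 → y = 0 := by
    intro n
    induction n with
    | zero =>
      intro y hy _
      ext i
      by_contra hne
      exact Nat.not_lt_zero i (hy i (Finsupp.mem_support_iff.mpr (by
        intro h0; exact hne (by simp [h0]))))
    | succ k ih =>
      intro y hy hsum
      have hsplit : (Finsupp.erase k y).sum (fun i a => g i a) + g k (y k) =
          y.sum fun i a => g i a := by
        conv_rhs => rw [← Finsupp.erase_add_single k y]
        rw [Finsupp.sum_add_index (by intro i _; simp) (by intro i _ a b; simp),
          Finsupp.sum_single_index (by simp)]
      have herase_supp : ∀ i ∈ (Finsupp.erase k y).support, i < k := by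
        intro i hi
        rw [Finsupp.support_erase, Finset.mem_erase] at hi
        exact lt_of_le_of_ne (Nat.lt_succ_iff.mp (hy i hi.2)) hi.1
      have hmem : (Finsupp.erase k y).sum (fun i a => g i a) ∈ (seq k).1 :=
        mem_seq _ k herase_supp
      have hgk : g k (y k) ∈ (seq k).1 ⊓ (g k).range := by
        refine AddSubgroup.mem_inf.mpr ⟨?_, ⟨y k, rfl⟩⟩
        have h0 : ((Finsupp.erase k y).sum fun i a => g i a) + g k (y k) = 0 :=
          hsplit.trans hsum
        have heq : g k (y k) = -((Finsupp.erase k y).sum fun i a => g i a) :=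
          eq_neg_of_add_eq_zero_right h0
        rw [heq]
        exact neg_mem hmem
      rw [step_disj (seq k)] at hgk
      have hyk : y k = 0 := step_inj (seq k) (by simpa using hgk)
      have herase0 : Finsupp.erase k y = 0 := by
        refine ih _ herase_supp ?_
        have := hsplit.trans hsum
        rw [hyk, map_zero, add_zero] at this
        exact this
      ext i
      rcases eq_or_ne i k with rfl | hik
      · simp [hyk]
      · have h2 : (Finsupp.erase k y) i = y i := Finsupp.erase_ne hik
        rw [herase0] at h2
        simpa using h2.symm
  -- finish: any x has support bounded by some n
  obtain ⟨n, hn⟩ : ∃ n, ∀ i ∈ x.support, i < n := by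
    rcases x.support.eq_empty_or_nonempty with he | hne
    · exact ⟨0, by simp [he]⟩
    · exact ⟨(x.support.max' hne) + 1, fun i hi =>
        Nat.lt_succ_of_le (x.support.le_max' i hi)⟩
  exact key n x hn hx
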